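/- There exists a k-algebra isomorphism ψ from the unital subalgebra of the k-linear endomorphism algebra of the space of derivations of P_n generated by all left multiplication operators L_D (for D ranging over all derivations of P_n) onto the unital subalgebra of the k-linear endomorphism algebra of P_n generated by all derivations of P_n (viewed as k-linear endomorphisms of P_n), such that ψ(L_D) = D for every derivation D. -/

import Mathlib

open MvPolynomial

/-- `Pn k n` is the polynomial algebra `k[x₁,…,xₙ]`. -/
abbrev Pn (k : Type*) [CommRing k] (n : ℕ) := MvPolynomial (Fin n) k

/-- `Der k n` is the space of `k`-linear derivations of `Pn k n`. -/
abbrev Der (k : Type*) [CommRing k] (n : ℕ) := Derivation k (Pn k n) (Pn k n)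

variable {k : Type*} [Field k] [CharZero k] {n : ℕ}

/-- The left-symmetric product of derivations: `(D · E)(xᵢ) = D (E xᵢ)`. -/
noncomputable def lsMul (D E : Der k n) : Der k n :=
  MvPolynomial.mkDerivation k (fun i => D (E (MvPolynomial.X i)))

/-- The Jacobian matrix of a derivation: `(J D)ᵢⱼ = ∂(D xᵢ)/∂xⱼ`. -/
noncomputable def jac (D : Der k n) : Matrix (Fin n) (Fin n) (Pn k n) :=
  Matrix.of fun i j => MvPolynomial.pderiv j (D (MvPolynomial.X i))

/-- The divergence of a derivation. -/
noncomputable def divg (D : Der k n) : Pn k n :=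
  ∑ i, MvPolynomial.pderiv i (D (MvPolynomial.X i))

/-- Right powers: `rpow D 1 = D`, `rpow D (r+1) = (rpow D r) · D` (for `r ≥ 1`). -/
noncomputable def rpow (D : Der k n) : ℕ → Der k n
  | 0 => D
  | 1 => D
  | (r+2) => lsMul (rpow D (r+1)) D

/-- Left powers: `lpow D 1 = D`, `lpow D (r+1) = D · (lpow D r)` (for `r ≥ 1`). -/
noncomputable def lpow (D : Der k n) : ℕ → Der k n
  | 0 => D
  | 1 => D
  | (r+2) => lsMul D (lpow D (r+1))

/-- Right multiplication operator `R_D : E ↦ E · D`, as a `k`-linear endomorphism. -/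
noncomputable def rmulOp (D : Der k n) : Der k n →ₗ[k] Der k n where
  toFun E := lsMul E D
  map_add' E₁ E₂ := by
    show (MvPolynomial.mkDerivationEquiv k) _ =
      (MvPolynomial.mkDerivationEquiv k) _ + (MvPolynomial.mkDerivationEquiv k) _
    rw [← map_add]
    exact congrArg _ (funext fun i => by simp)
  map_smul' c E := by
    show (MvPolynomial.mkDerivationEquiv k) _ = c • (MvPolynomial.mkDerivationEquiv k) _
    rw [← map_smul]
    exact congrArg _ (funext fun i => by simp)

/-- Left multiplication operator `L_D : E ↦ D · E`, as a `k`-linear endomorphism. -/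
noncomputable def lmulOp (D : Der k n) : Der k n →ₗ[k] Der k n where
  toFun E := lsMul D E
  map_add' E₁ E₂ := by
    show (MvPolynomial.mkDerivationEquiv k) _ =
      (MvPolynomial.mkDerivationEquiv k) _ + (MvPolynomial.mkDerivationEquiv k) _
    rw [← map_add]
    exact congrArg _ (funext fun i => by simp)
  map_smul' c E := by
    show (MvPolynomial.mkDerivationEquiv k) _ = c • (MvPolynomial.mkDerivationEquiv k) _
    rw [← map_smul]
    exact congrArg _ (funext fun i => by simp)

/-- `Zc F i a` is the coefficient of `t^i` in the image of `a` under `xⱼ ↦ xⱼ + t·fⱼ`. -/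
noncomputable def Zc (F : Fin n → Pn k n) (i : ℕ) (a : Pn k n) : Pn k n :=
  (MvPolynomial.aeval
    (fun j => Polynomial.C (MvPolynomial.X j) + Polynomial.C (F j) * Polynomial.X :
      Fin n → Polynomial (Pn k n)) a).coeff i

/-- `PsiOp F m a = Σ (−1)^{k−1} r_k Z_{r₁}(Z_{r₂}(⋯ Z_{r_k}(a)⋯))`, summed over
compositions `(r₁,…,r_k)` of `m`. -/
noncomputable def PsiOp (F : Fin n → Pn k n) (m : ℕ) (a : Pn k n) : Pn k n :=
  ∑ c : Composition m,
    (-1 : Pn k n) ^ (c.length - 1) * ((c.blocks.getLastD 0 : ℕ) : Pn k n) *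
      (c.blocks.foldr (fun r b => Zc F r b) a)


lemma compLeft_apply_aux {R M₂ M₃ : Type*} [Semiring R] [AddCommMonoid M₂] [AddCommMonoid M₃]
    [Module R M₂] [Module R M₃] (f : M₂ →ₗ[R] M₃) (I : Type*) (h : I → M₂) (i : I) :
    (f.compLeft I) h i = f (h i) := rfl

noncomputable def Phi {k : Type*} [Field k] [CharZero k] {n : ℕ} :
    Module.End k (Pn k n) →ₐ[k] Module.End k (Der k n) where
  toFun P := ((mkDerivationEquiv k).toLinearMap.comp
      ((P.compLeft (Fin n)).comp (mkDerivationEquiv k (σ := Fin n) (A := Pn k n)).symm.toLinearMap))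
  map_one' := by
    ext E i
    simp [compLeft_apply_aux, mkDerivationEquiv]
  map_mul' P Q := by
    ext E i
    simp [compLeft_apply_aux, mkDerivationEquiv]
  map_zero' := by
    ext E i
    simp [compLeft_apply_aux, mkDerivationEquiv]
  map_add' P Q := by
    ext E i
    simp [compLeft_apply_aux, mkDerivationEquiv]
  commutes' c := by
    ext E i
    simp [compLeft_apply_aux, mkDerivationEquiv, Module.algebraMap_end_apply]

lemma Phi_der {k : Type*} [Field k] [CharZero k] {n : ℕ} (D : Der k n) :
    Phi (D.toLinearMap : Module.End k (Pn k n)) = lmulOp D := by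
  ext E i
  simp [Phi, lmulOp, lsMul, compLeft_apply_aux, mkDerivationEquiv]

lemma Phi_inj {k : Type*} [Field k] [CharZero k] {n : ℕ} (hn : 1 ≤ n) :
    Function.Injective (Phi : Module.End k (Pn k n) →ₐ[k] Module.End k (Der k n)) := by
  intro P Q h
  refine LinearMap.ext fun a => ?_
  have i : Fin n := ⟨0, hn⟩
  have := congrArg (fun T : Module.End k (Der k n) =>
    (T (mkDerivation k (fun _ => a)) : Der k n) (X i)) h
  simpa [Phi, compLeft_apply_aux, mkDerivationEquiv] using this

/-- the unital subalgebra of `End_k(Der)` generated by the left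
multiplication operators is isomorphic, via `L_D ↦ D`, to the unital subalgebra of
`End_k(Pₙ)` generated by all derivations. -/
theorem exists_leftMultiplicationAlgebra_iso (hn : 1 ≤ n) :
    ∃ ψ : (Algebra.adjoin k (Set.range (lmulOp : Der k n → Module.End k (Der k n)))) ≃ₐ[k]
        (Algebra.adjoin k
          (Set.range (fun D : Der k n => (D.toLinearMap : Module.End k (Pn k n))))),
      ∀ D : Der k n,
        ((ψ ⟨lmulOp D, Algebra.subset_adjoin (Set.mem_range_self D)⟩ :
            Algebra.adjoin k
              (Set.range (fun D : Der k n => (D.toLinearMap : Module.End k (Pn k n))))) :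
          Module.End k (Pn k n)) = D.toLinearMap := by
  classical
  have hmap : (Algebra.adjoin k
      (Set.range (fun D : Der k n => (D.toLinearMap : Module.End k (Pn k n))))).map
        (Phi : Module.End k (Pn k n) →ₐ[k] Module.End k (Der k n)) =
      Algebra.adjoin k (Set.range (lmulOp : Der k n → Module.End k (Der k n))) := by
    rw [AlgHom.map_adjoin]
    congr 1
    rw [← Set.range_comp]
    exact congrArg Set.range (funext fun D => Phi_der D)
  let e := Subalgebra.equivMapOfInjective
    (Algebra.adjoin k (Set.range (fun D : Der k n => (D.toLinearMap : Module.End k (Pn k n)))))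
    (Phi : Module.End k (Pn k n) →ₐ[k] Module.End k (Der k n)) (Phi_inj hn)
  let e2 := Subalgebra.equivOfEq _ _ hmap
  refine ⟨(e.trans e2).symm, fun D => ?_⟩
  have : (e.trans e2) ⟨D.toLinearMap, Algebra.subset_adjoin (Set.mem_range_self D)⟩ =
      ⟨lmulOp D, Algebra.subset_adjoin (Set.mem_range_self D)⟩ := by
    apply Subtype.ext
    show Phi D.toLinearMap = lmulOp D
    exact Phi_der D
  rw [← this, AlgEquiv.symm_apply_apply]
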